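/- Suppose that for every N ≥ 0 the Gram matrix (⟨z^n, z^m⟩)_{0 ≤ n,m ≤ N} is invertible, and let (P_n)_{n≥0} be a sequence of orthogonal polynomials for the pairing. Then, with ζ = exp(2πi/3), for every n ≥ 0 one has P_n(ζ·z) = ζ^n · P_n(z) as polynomials. -/

import Mathlib

open MeasureTheory Polynomial Complex

/-- The density `exp(-a|z|² + i t (z³ + conj(z)³))`. -/
noncomputable def cubicDensity (a t : ℝ) (z : ℂ) : ℂ :=
  Complex.exp (-(a : ℂ) * (‖z‖ : ℂ) ^ 2 +
    Complex.I * (t : ℂ) * (z ^ 3 + (starRingEnd ℂ) z ^ 3))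

/-- The pairing `⟨f,g⟩ = ∫_ℂ f(z) conj(g(-z)) exp(-a|z|² + i t (z³ + conj(z)³)) dx dy`. -/
noncomputable def cubicPairing (a t : ℝ) (f g : Polynomial ℂ) : ℂ :=
  ∫ z : ℂ, f.eval z * (starRingEnd ℂ) (g.eval (-z)) * cubicDensity a t z

lemma norm_cubicDensity (a t : ℝ) (z : ℂ) :
    ‖cubicDensity a t z‖ = Real.exp (-a * ‖z‖ ^ 2) := by
  rw [cubicDensity, Complex.norm_exp]
  congr 1
  have him : ((starRingEnd ℂ) z ^ 3).im = -(z ^ 3).im := by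
    rw [← map_pow, Complex.conj_im]
  have hre : (((‖z‖ : ℝ) : ℂ) ^ 2).re = ‖z‖ ^ 2 := by
    rw [← Complex.ofReal_pow, Complex.ofReal_re]
  simp [Complex.add_re, Complex.mul_re, Complex.mul_im, Complex.conj_re, Complex.conj_im]
  rw [him, hre]
  ring

lemma pow_le_exp_sq {c : ℝ} (hc : 0 < c) (k : ℕ) (x : ℝ) (hx : 0 ≤ x) :
    x ^ k ≤ (1 + k.factorial / c ^ k) * Real.exp (c * x ^ 2) := by
  have hck : (0:ℝ) < c ^ k := pow_pos hc k
  have hfac : (0:ℝ) ≤ (k.factorial : ℝ) / c ^ k := by positivity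
  have hexp : (1:ℝ) ≤ Real.exp (c * x ^ 2) := Real.one_le_exp (by positivity)
  have key : ∀ y : ℝ, 0 ≤ y → y ^ k / k.factorial ≤ Real.exp y := by
    intro y hy
    calc y ^ k / k.factorial
        ≤ ∑ i ∈ Finset.range (k+1), y ^ i / i.factorial :=
          Finset.single_le_sum (f := fun i => y ^ i / i.factorial)
            (fun i _ => by positivity) (Finset.self_mem_range_succ k)
      _ ≤ Real.exp y := Real.sum_le_exp_of_nonneg hy _
  rcases le_total x 1 with h | h
  · calc x ^ k ≤ 1 := pow_le_one₀ hx h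
      _ ≤ (1 + k.factorial / c ^ k) * Real.exp (c * x ^ 2) := by nlinarith
  · have h2 : x ^ k ≤ x ^ (2 * k) := pow_le_pow_right₀ h (by omega)
    have h3 : x ^ (2 * k) = (c * x ^ 2) ^ k / c ^ k := by
      rw [pow_mul, mul_pow]
      field_simp
    have h4 : (c * x ^ 2) ^ k ≤ k.factorial * Real.exp (c * x ^ 2) := by
      have := key (c * x ^ 2) (by positivity)
      rw [div_le_iff₀ (by positivity : (0:ℝ) < (k.factorial:ℝ))] at this
      linarith [this]
    calc x ^ k ≤ (c * x ^ 2) ^ k / c ^ k := h2.trans_eq h3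
      _ ≤ (k.factorial * Real.exp (c * x ^ 2)) / c ^ k := by
          gcongr
      _ ≤ (1 + k.factorial / c ^ k) * Real.exp (c * x ^ 2) := by
          have hE : (0:ℝ) < Real.exp (c * x ^ 2) := Real.exp_pos _
          have h5 : (k.factorial:ℝ) / c ^ k * Real.exp (c * x ^ 2)
              = (k.factorial:ℝ) * Real.exp (c * x ^ 2) / c ^ k := div_mul_eq_mul_div _ _ _
          rw [add_mul, one_mul, h5]
          linarith

lemma poly_exp_bound {c : ℝ} (hc : 0 < c) (p : Polynomial ℂ) :
    ∃ C : ℝ, 0 ≤ C ∧ ∀ z : ℂ, ‖p.eval z‖ ≤ C * Real.exp (c * ‖z‖ ^ 2) := by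
  induction p using Polynomial.induction_on' with
  | add p q hp hq =>
    obtain ⟨C1, hC1, h1⟩ := hp
    obtain ⟨C2, hC2, h2⟩ := hq
    refine ⟨C1 + C2, by linarith, fun z => ?_⟩
    calc ‖(p + q).eval z‖ ≤ ‖p.eval z‖ + ‖q.eval z‖ := by
          rw [Polynomial.eval_add]; exact norm_add_le _ _
      _ ≤ C1 * Real.exp (c * ‖z‖ ^ 2) + C2 * Real.exp (c * ‖z‖ ^ 2) :=
          add_le_add (h1 z) (h2 z)
      _ = (C1 + C2) * Real.exp (c * ‖z‖ ^ 2) := by ring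
  | monomial n b =>
    refine ⟨‖b‖ * (1 + n.factorial / c ^ n), by positivity, fun z => ?_⟩
    rw [Polynomial.eval_monomial, norm_mul, norm_pow, mul_assoc]
    exact mul_le_mul_of_nonneg_left (pow_le_exp_sq hc n ‖z‖ (norm_nonneg z)) (norm_nonneg b)

lemma integrable_gauss {b : ℝ} (hb : 0 < b) :
    Integrable (fun z : ℂ => Real.exp (-b * ‖z‖ ^ 2)) := by
  have h := (GaussianFourier.integrable_cexp_neg_mul_sq_norm_add (V := ℂ)
    (b := (b : ℂ)) (by simpa using hb) 0 0).norm
  refine h.congr (Filter.Eventually.of_forall fun z => ?_)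
  have he : -(b:ℂ) * (‖z‖:ℂ) ^ 2 + 0 * ((inner ℝ (0:ℂ) z : ℝ) : ℂ) = ((-b * ‖z‖ ^ 2 : ℝ) : ℂ) := by
    push_cast; ring
  simp only [he, Complex.norm_exp, Complex.ofReal_re]

lemma continuous_cubicDensity (a t : ℝ) : Continuous (cubicDensity a t) := by
  unfold cubicDensity
  refine Complex.continuous_exp.comp (Continuous.add ?_ ?_)
  · exact continuous_const.mul ((Complex.continuous_ofReal.comp continuous_norm).pow 2)
  · exact continuous_const.mul ((continuous_pow 3).add (continuous_star.pow 3))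

lemma integrable_kernel {a : ℝ} (t : ℝ) (ha : 0 < a) (f g : Polynomial ℂ) :
    Integrable (fun z : ℂ => f.eval z * (starRingEnd ℂ) (g.eval (-z)) * cubicDensity a t z) := by
  have ha4 : (0:ℝ) < a / 4 := by linarith
  obtain ⟨C1, hC1, h1⟩ := poly_exp_bound ha4 f
  obtain ⟨C2, hC2, h2⟩ := poly_exp_bound ha4 g
  apply Integrable.mono' ((integrable_gauss (b := a/2) (by linarith)).const_mul (C1 * C2))
  · apply Continuous.aestronglyMeasurable
    exact ((f.continuous_aeval.mul
      (continuous_star.comp (g.continuous_aeval.comp continuous_neg))).mul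
      (continuous_cubicDensity a t))
  · refine Filter.Eventually.of_forall fun z => ?_
    rw [norm_mul, norm_mul, norm_cubicDensity, RCLike.norm_conj]
    have e1 : ‖f.eval z‖ ≤ C1 * Real.exp ((a/4) * ‖z‖ ^ 2) := h1 z
    have e2 : ‖g.eval (-z)‖ ≤ C2 * Real.exp ((a/4) * ‖z‖ ^ 2) := by
      simpa [norm_neg] using h2 (-z)
    have hmul : Real.exp ((a/4) * ‖z‖ ^ 2) * Real.exp ((a/4) * ‖z‖ ^ 2) * Real.exp (-a * ‖z‖ ^ 2)
        = Real.exp (-(a/2) * ‖z‖ ^ 2) := by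
      rw [← Real.exp_add, ← Real.exp_add]; ring_nf
    calc ‖f.eval z‖ * ‖g.eval (-z)‖ * Real.exp (-a * ‖z‖ ^ 2)
        ≤ (C1 * Real.exp ((a/4) * ‖z‖ ^ 2)) * (C2 * Real.exp ((a/4) * ‖z‖ ^ 2))
            * Real.exp (-a * ‖z‖ ^ 2) := by
          gcongr
      _ = C1 * C2 * Real.exp (-(a/2) * ‖z‖ ^ 2) := by
          rw [← hmul]; ring

section Linearity

variable {a : ℝ}

lemma pairing_add_left (t : ℝ) (ha : 0 < a) (f₁ f₂ g : Polynomial ℂ) :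
    cubicPairing a t (f₁ + f₂) g = cubicPairing a t f₁ g + cubicPairing a t f₂ g := by
  unfold cubicPairing
  rw [← integral_add (integrable_kernel t ha f₁ g) (integrable_kernel t ha f₂ g)]
  congr 1; funext z
  simp only [Polynomial.eval_add]; ring

lemma pairing_smul_left (t : ℝ) (c : ℂ) (f g : Polynomial ℂ) :
    cubicPairing a t (Polynomial.C c * f) g = c * cubicPairing a t f g := by
  unfold cubicPairing
  rw [← integral_const_mul]
  congr 1; funext z
  simp only [Polynomial.eval_mul, Polynomial.eval_C]; ring

lemma pairing_smul_right (t : ℝ) (c : ℂ) (f g : Polynomial ℂ) :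
    cubicPairing a t f (Polynomial.C c * g) = (starRingEnd ℂ) c * cubicPairing a t f g := by
  unfold cubicPairing
  rw [← integral_const_mul]
  congr 1; funext z
  simp only [Polynomial.eval_mul, Polynomial.eval_C, map_mul]; ring

lemma pairing_sub_right (t : ℝ) (ha : 0 < a) (f g₁ g₂ : Polynomial ℂ) :
    cubicPairing a t f (g₁ - g₂) = cubicPairing a t f g₁ - cubicPairing a t f g₂ := by
  unfold cubicPairing
  rw [← integral_sub (integrable_kernel t ha f g₁) (integrable_kernel t ha f g₂)]
  congr 1; funext z
  simp only [Polynomial.eval_sub, map_sub]; ring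

lemma pairing_sum_right (t : ℝ) (ha : 0 < a) (f : Polynomial ℂ) {ι : Type*} (s : Finset ι) (G : ι → Polynomial ℂ) :
    cubicPairing a t f (∑ k ∈ s, G k) = ∑ k ∈ s, cubicPairing a t f (G k) := by
  classical
  induction s using Finset.induction_on with
  | empty =>
    simp only [Finset.sum_empty]
    unfold cubicPairing
    simp
  | @insert k s' hk ih =>
    rw [Finset.sum_insert hk, Finset.sum_insert hk, ← ih]
    unfold cubicPairing
    rw [← integral_add (integrable_kernel t ha f _) (integrable_kernel t ha f _)]
    congr 1; funext z
    simp only [Polynomial.eval_add, map_add]; ring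

end Linearity

lemma orth_low {a : ℝ} (t : ℝ) (ha : 0 < a) (R : ℕ → Polynomial ℂ)
    (hR : ∀ k, (R k).Monic ∧ (R k).natDegree = k)
    (hRo : ∀ k m, k ≠ m → cubicPairing a t (R k) (R m) = 0) :
    ∀ j : ℕ, ∀ f : Polynomial ℂ, f.natDegree ≤ j → ∀ n, j < n → cubicPairing a t f (R n) = 0 := by
  intro j
  induction j with
  | zero =>
    intro f hf n hn
    have hR0 : R 0 = 1 := by
      have h := hR 0
      exact (Polynomial.Monic.natDegree_eq_zero h.1).mp h.2
    rw [Polynomial.eq_C_of_natDegree_le_zero hf]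
    have : Polynomial.C (f.coeff 0) = Polynomial.C (f.coeff 0) * R 0 := by rw [hR0, mul_one]
    rw [this, pairing_smul_left t, hRo 0 n (by omega), mul_zero]
  | succ j ih =>
    intro f hf n hn
    have hRj := hR (j + 1)
    set c := f.coeff (j + 1) with hc
    have key : f = (f - Polynomial.C c * R (j + 1)) + Polynomial.C c * R (j + 1) := by ring
    rw [key, pairing_add_left t ha, pairing_smul_left t,
      hRo (j + 1) n (by omega), mul_zero, add_zero]
    apply ih _ _ n (by omega)
    rw [Polynomial.natDegree_le_iff_coeff_eq_zero]
    intro m hm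
    rw [Polynomial.coeff_sub, Polynomial.coeff_C_mul]
    rcases eq_or_lt_of_le (Nat.succ_le_of_lt hm) with h | h
    · have hcoeff : (R (j + 1)).coeff (j + 1) = 1 := by
        have := hRj.1.coeff_natDegree
        rwa [hRj.2] at this
      rw [← h, hcoeff, mul_one, hc, sub_self]
    · rw [Polynomial.coeff_eq_zero_of_natDegree_lt (lt_of_le_of_lt hf h),
        Polynomial.coeff_eq_zero_of_natDegree_lt (by rw [hRj.2]; exact h),
        mul_zero, sub_self]

noncomputable def zeta3 : ℂ := Complex.exp (2 * Real.pi * Complex.I / 3)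

lemma zeta3_ne : zeta3 ≠ 0 := Complex.exp_ne_zero _

lemma zeta3_cube : zeta3 ^ 3 = 1 := by
  have h : ((3 : ℕ) : ℂ) * (2 * Real.pi * Complex.I / 3) = 2 * Real.pi * Complex.I := by
    push_cast; ring
  rw [zeta3, ← Complex.exp_nat_mul, h, Complex.exp_two_pi_mul_I]

lemma zeta3_circle : ∃ u : Circle, (u : ℂ) = zeta3 := by
  refine ⟨Circle.exp (2 * Real.pi / 3), ?_⟩
  show Complex.exp (((2 * Real.pi / 3 : ℝ) : ℂ) * Complex.I) = zeta3
  rw [zeta3]; congr 1; push_cast; ring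

lemma cubicDensity_rot (a t : ℝ) (z : ℂ) :
    cubicDensity a t (zeta3 * z) = cubicDensity a t z := by
  unfold cubicDensity
  have habs : ‖zeta3 * z‖ = ‖z‖ := by
    rw [norm_mul]
    have : ‖zeta3‖ = 1 := by
      rw [zeta3, Complex.norm_exp]
      have : (2 * (Real.pi : ℂ) * Complex.I / 3).re = 0 := by
        simp [Complex.div_re, Complex.mul_re, Complex.mul_im]
      rw [this, Real.exp_zero]
    rw [this, one_mul]
  have hcube : (zeta3 * z) ^ 3 = z ^ 3 := by rw [mul_pow, zeta3_cube, one_mul]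
  have hconj : (starRingEnd ℂ) (zeta3 * z) ^ 3 = (starRingEnd ℂ) z ^ 3 := by
    rw [map_mul, mul_pow, ← map_pow, zeta3_cube, map_one, one_mul]
  rw [habs, hcube, hconj]

lemma pairing_rot (a t : ℝ) (f g : Polynomial ℂ) :
    cubicPairing a t (f.comp (Polynomial.C zeta3 * Polynomial.X))
      (g.comp (Polynomial.C zeta3 * Polynomial.X)) = cubicPairing a t f g := by
  obtain ⟨u, hu⟩ := zeta3_circle
  unfold cubicPairing
  rw [← MeasureTheory.integral_comp (rotation u)
    (fun z => f.eval z * (starRingEnd ℂ) (g.eval (-z)) * cubicDensity a t z)]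
  congr 1; funext z
  simp only [rotation_apply, hu]
  rw [Polynomial.eval_comp, Polynomial.eval_comp]
  simp only [Polynomial.eval_mul, Polynomial.eval_C, Polynomial.eval_X]
  rw [cubicDensity_rot, mul_neg]

theorem stmt_1 (a t : ℝ) (ha : 0 < a)
    (hGram : ∀ N : ℕ, (Matrix.of fun n m : Fin (N + 1) =>
      cubicPairing a t (X ^ (n : ℕ)) (X ^ (m : ℕ))).det ≠ 0)
    (P : ℕ → Polynomial ℂ)
    (hmonic : ∀ n, (P n).Monic ∧ (P n).natDegree = n)
    (horth : ∀ n m, n ≠ m → cubicPairing a t (P n) (P m) = 0) :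
    ∀ n : ℕ, (P n).comp (C (Complex.exp (2 * Real.pi * Complex.I / 3)) * X) =
      C (Complex.exp (2 * Real.pi * Complex.I / 3) ^ n) * P n := by
  have hzeq : Complex.exp (2 * Real.pi * Complex.I / 3) = zeta3 := rfl
  simp only [hzeq]
  set S : ℕ → Polynomial ℂ :=
    fun k => C ((zeta3 ^ k)⁻¹) * ((P k).comp (C zeta3 * X)) with hS
  have hdeg1 : (C zeta3 * X).natDegree = 1 := Polynomial.natDegree_C_mul_X _ zeta3_ne
  have hScomp_deg : ∀ k, ((P k).comp (C zeta3 * X)).natDegree = k := fun k => by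
    rw [Polynomial.natDegree_comp, hdeg1, (hmonic k).2, mul_one]
  have hcompl : ∀ k, ((P k).comp (C zeta3 * X)).leadingCoeff = zeta3 ^ k := fun k => by
    rw [Polynomial.leadingCoeff_comp (by rw [hdeg1]; exact one_ne_zero),
      (hmonic k).1.leadingCoeff, one_mul, Polynomial.leadingCoeff_C_mul_X, (hmonic k).2]
  have hSmonic : ∀ k, (S k).Monic ∧ (S k).natDegree = k := by
    intro k
    constructor
    · show (S k).leadingCoeff = 1
      rw [hS]
      simp only
      rw [Polynomial.leadingCoeff_mul, Polynomial.leadingCoeff_C, hcompl]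
      exact inv_mul_cancel₀ (pow_ne_zero _ zeta3_ne)
    · rw [hS]
      simp only
      rw [Polynomial.natDegree_C_mul (inv_ne_zero (pow_ne_zero _ zeta3_ne)), hScomp_deg]
  have hSorth : ∀ k m, k ≠ m → cubicPairing a t (S k) (S m) = 0 := by
    intro k m hkm
    rw [hS]
    simp only
    rw [pairing_smul_left, pairing_smul_right, pairing_rot, horth k m hkm,
      mul_zero, mul_zero]
  intro n
  rcases Nat.eq_zero_or_pos n with hn0 | hn
  · subst hn0
    have hP0 : P 0 = 1 := ((hmonic 0).1.natDegree_eq_zero).mp (hmonic 0).2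
    rw [hP0]
    simp
  obtain ⟨N, rfl⟩ : ∃ N, n = N + 1 := ⟨n - 1, by omega⟩
  set D := S (N + 1) - P (N + 1) with hD
  have hDdeg : D.natDegree < N + 1 := by
    have h1 : D.natDegree ≤ N := by
      rw [Polynomial.natDegree_le_iff_coeff_eq_zero]
      intro m hm
      have hmn : N + 1 ≤ m := by omega
      rw [hD, Polynomial.coeff_sub]
      rcases eq_or_lt_of_le hmn with h | h
      · rw [← h]
        have e1 : (S (N+1)).coeff (N+1) = 1 := by
          have := (hSmonic (N+1)).1.coeff_natDegree
          rwa [(hSmonic (N+1)).2] at this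
        have e2 : (P (N+1)).coeff (N+1) = 1 := by
          have := (hmonic (N+1)).1.coeff_natDegree
          rwa [(hmonic (N+1)).2] at this
        rw [e1, e2, sub_self]
      · rw [Polynomial.coeff_eq_zero_of_natDegree_lt (by rw [(hSmonic (N+1)).2]; exact h),
          Polynomial.coeff_eq_zero_of_natDegree_lt (by rw [(hmonic (N+1)).2]; exact h),
          sub_self]
    omega
  have hDpair : ∀ j : ℕ, j < N + 1 → cubicPairing a t (X ^ j) D = 0 := by
    intro j hj
    rw [hD, pairing_sub_right t ha,
      orth_low t ha S hSmonic hSorth j (X ^ j) (by simp) (N+1) hj,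
      orth_low t ha P hmonic horth j (X ^ j) (by simp) (N+1) hj, sub_self]
  set G := Matrix.of fun j k : Fin (N + 1) =>
    cubicPairing a t (X ^ (j : ℕ)) (X ^ (k : ℕ)) with hGdef
  set v : Fin (N + 1) → ℂ := fun k => (starRingEnd ℂ) (D.coeff k) with hv
  have hGv : G.mulVec v = 0 := by
    funext j
    have h0 := hDpair j j.isLt
    rw [Polynomial.as_sum_range' D (N+1) hDdeg, pairing_sum_right t ha] at h0
    have he : ∀ k ∈ Finset.range (N+1),
        cubicPairing a t (X ^ (j : ℕ)) ((Polynomial.monomial k) (D.coeff k))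
          = (starRingEnd ℂ) (D.coeff k) * cubicPairing a t (X ^ (j : ℕ)) (X ^ k) := by
      intro k _
      rw [← Polynomial.C_mul_X_pow_eq_monomial, pairing_smul_right]
    rw [Finset.sum_congr rfl he,
      ← Fin.sum_univ_eq_sum_range
        (fun k => (starRingEnd ℂ) (D.coeff k) * cubicPairing a t (X ^ (j:ℕ)) (X ^ k))
        (N+1)] at h0
    show ∑ k, G j k * v k = 0
    rw [← h0]
    apply Finset.sum_congr rfl
    intro k _
    rw [hGdef, hv]
    simp only [Matrix.of_apply]
    ring
  have hvz : v = 0 := by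
    have hGunit : IsUnit G.det := isUnit_iff_ne_zero.mpr (hGram N)
    calc v = (1 : Matrix (Fin (N+1)) (Fin (N+1)) ℂ).mulVec v := (Matrix.one_mulVec v).symm
      _ = (G⁻¹ * G).mulVec v := by rw [Matrix.nonsing_inv_mul G hGunit]
      _ = G⁻¹.mulVec (G.mulVec v) := (Matrix.mulVec_mulVec v G⁻¹ G).symm
      _ = 0 := by rw [hGv, Matrix.mulVec_zero]
  have hDzero : D = 0 := by
    have hcoeff : ∀ k, k < N + 1 → D.coeff k = 0 := by
      intro k hk
      have h := congrFun hvz ⟨k, hk⟩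
      simp only [hv, Pi.zero_apply] at h
      exact (starRingEnd ℂ).injective (by simpa using h)
    rw [Polynomial.as_sum_range' D (N+1) hDdeg]
    apply Finset.sum_eq_zero
    intro k hk
    rw [hcoeff k (Finset.mem_range.mp hk), map_zero]
  have hSP : S (N+1) = P (N+1) := sub_eq_zero.mp hDzero
  calc (P (N+1)).comp (C zeta3 * X)
      = C (zeta3 ^ (N+1)) * (C ((zeta3 ^ (N+1))⁻¹) * ((P (N+1)).comp (C zeta3 * X))) := by
        rw [← mul_assoc, ← Polynomial.C_mul, mul_inv_cancel₀ (pow_ne_zero _ zeta3_ne),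
          Polynomial.C_1, one_mul]
    _ = C (zeta3 ^ (N+1)) * S (N+1) := by rw [hS]
    _ = C (zeta3 ^ (N+1)) * P (N+1) := by rw [hSP]
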